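/- Let $x \in C([0,T]) \cap C^1((0,T])$ and suppose $x$ attains its minimum over $(0,T]$ at a point $t_1 \in (0,T]$ with $x(t_1) \le x(0)$. Then the Caputo fractional derivative satisfies $^{C}_{0}D^{\alpha}_{t} x(t_1) = \frac{1}{\Gamma(1-\alpha)} \int_0^{t_1} (t_1 - \tau)^{-\alpha} x'(\tau)\, d\tau \le 0$ for any $0 < \alpha < 1$. -/

import Mathlib

open Set MeasureTheory

theorem caputo_nonpos_at_min (T α : ℝ) (hT : 0 < T) (hα0 : 0 < α) (hα1 : α < 1)
    (x x' : ℝ → ℝ)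
    (hcont : ContinuousOn x (Icc 0 T))
    (hderiv : ∀ t ∈ Ioc (0 : ℝ) T, HasDerivAt x (x' t) t)
    (hderiv_cont : ContinuousOn x' (Ioc 0 T))
    (t₁ : ℝ) (ht₁ : t₁ ∈ Ioc (0 : ℝ) T)
    (hmin : ∀ t ∈ Ioc (0 : ℝ) T, x t₁ ≤ x t)
    (hmin0 : x t₁ ≤ x 0) :
    (1 / Real.Gamma (1 - α)) * ∫ τ in (0 : ℝ)..t₁, (t₁ - τ) ^ (-α) * x' τ ≤ 0 := by
  obtain ⟨ht₁0, ht₁T⟩ := ht₁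
  set f : ℝ → ℝ := fun τ => (t₁ - τ) ^ (-α) * x' τ with hf_def
  have hΓ : 0 < Real.Gamma (1 - α) := Real.Gamma_pos_of_pos (by linarith)
  by_cases hint : IntervalIntegrable f volume 0 t₁
  swap
  · rw [intervalIntegral.integral_undef hint, mul_zero]
  -- the absolute-value weight function
  set g : ℝ → ℝ := fun τ => (t₁ - τ) ^ (-α) * |x' τ| with hg_def
  have hfg : ∀ τ, τ ≤ t₁ → |f τ| = g τ := by
    intro τ hτ
    simp only [hf_def, hg_def, abs_mul]
    rw [abs_of_nonneg (Real.rpow_nonneg (by linarith) _)]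
  have hg_int : IntervalIntegrable g volume 0 t₁ := by
    rw [intervalIntegrable_iff_integrableOn_Ioc_of_le ht₁0.le] at *
    exact MeasureTheory.IntegrableOn.congr_fun hint.abs (fun τ hτ => hfg τ hτ.2)
      measurableSet_Ioc
  -- key inequality for each u ∈ (0, t₁)
  have key : ∀ u ∈ Ioo (0 : ℝ) t₁,
      (∫ τ in (0 : ℝ)..t₁, f τ) ≤ 2 * ∫ τ in u..t₁, g τ := by
    intro u hu
    obtain ⟨hu0, hut⟩ := hu
    have hsub1 : uIcc 0 u ⊆ uIcc 0 t₁ := by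
      rw [uIcc_of_le hu0.le, uIcc_of_le ht₁0.le]
      exact Icc_subset_Icc le_rfl hut.le
    have hsub2 : uIcc u t₁ ⊆ uIcc 0 t₁ := by
      rw [uIcc_of_le hut.le, uIcc_of_le ht₁0.le]
      exact Icc_subset_Icc hu0.le le_rfl
    have hf_int_0u : IntervalIntegrable f volume 0 u := hint.mono_set hsub1
    have hf_int_ut : IntervalIntegrable f volume u t₁ := hint.mono_set hsub2
    have hg_int_ut : IntervalIntegrable g volume u t₁ := hg_int.mono_set hsub2
    -- continuity of x on subintervals
    have hxc : ContinuousOn x (Icc 0 t₁) :=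
      hcont.mono (Icc_subset_Icc le_rfl ht₁T)
    -- the function used for integration by parts on [0, u]
    set h : ℝ → ℝ := fun τ => (x τ - x t₁) * (t₁ - τ) ^ (-α) with hh_def
    set p : ℝ → ℝ := fun τ => (x τ - x t₁) * (α * (t₁ - τ) ^ (-α - 1)) with hp_def
    have hrpow_cont : ContinuousOn (fun τ : ℝ => (t₁ - τ) ^ (-α)) (Icc 0 u) := by
      apply ContinuousOn.rpow_const
      · exact (continuous_const.sub continuous_id).continuousOn
      · intro τ hτ
        left
        have h1 : τ ≤ u := hτ.2
        have h2 : (0 : ℝ) < t₁ - τ := by linarith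
        exact ne_of_gt h2
    have hrpow_cont' : ContinuousOn (fun τ : ℝ => α * (t₁ - τ) ^ (-α - 1)) (Icc 0 u) := by
      apply continuousOn_const.mul
      apply ContinuousOn.rpow_const
      · exact (continuous_const.sub continuous_id).continuousOn
      · intro τ hτ
        left
        have h1 : τ ≤ u := hτ.2
        have h2 : (0 : ℝ) < t₁ - τ := by linarith
        exact ne_of_gt h2
    have hxc0u : ContinuousOn x (Icc 0 u) := hxc.mono (Icc_subset_Icc le_rfl hut.le)
    have hcont_h : ContinuousOn h (Icc 0 u) :=
      (hxc0u.sub continuousOn_const).mul hrpow_cont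
    have hderiv_h : ∀ τ ∈ Ioo 0 u, HasDerivAt h (f τ + p τ) τ := by
      intro τ hτ
      have hxd : HasDerivAt x (x' τ) τ :=
        hderiv τ ⟨hτ.1, by linarith [hτ.2]⟩
      have h1 : HasDerivAt (fun s => x s - x t₁) (x' τ) τ := hxd.sub_const _
      have hpos : 0 < t₁ - τ := by linarith [hτ.2]
      have hb : HasDerivAt (fun s : ℝ => t₁ - s) (-1) τ := by
        simpa using (hasDerivAt_id τ).const_sub t₁
      have h2 : HasDerivAt (fun s : ℝ => (t₁ - s) ^ (-α)) (α * (t₁ - τ) ^ (-α - 1)) τ := by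
        have := (Real.hasDerivAt_rpow_const (x := t₁ - τ) (p := -α)
          (Or.inl hpos.ne')).comp τ hb
        exact this.congr_deriv (by ring)
      have := h1.mul h2
      exact this.congr_deriv (by simp only [hf_def, hp_def]; ring)
    have hp_cont : ContinuousOn p (Icc 0 u) :=
      (hxc0u.sub continuousOn_const).mul hrpow_cont'
    have hp_int : IntervalIntegrable p volume 0 u := by
      apply ContinuousOn.intervalIntegrable
      rwa [uIcc_of_le hu0.le]
    have hfp_int : IntervalIntegrable (fun τ => f τ + p τ) volume 0 u :=
      hf_int_0u.add hp_int
    have hIBP : ∫ τ in (0 : ℝ)..u, (f τ + p τ) = h u - h 0 :=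
      intervalIntegral.integral_eq_sub_of_hasDerivAt_of_le hu0.le hcont_h hderiv_h hfp_int
    have hsplit : (∫ τ in (0 : ℝ)..u, f τ) + ∫ τ in (0 : ℝ)..u, p τ = h u - h 0 := by
      rw [← intervalIntegral.integral_add hf_int_0u hp_int]
      exact hIBP
    have hx_ge : ∀ τ ∈ Icc (0 : ℝ) u, x t₁ ≤ x τ := by
      intro τ hτ
      rcases eq_or_lt_of_le hτ.1 with h0 | h0
      · rw [← h0]; exact hmin0
      · exact hmin τ ⟨h0, by linarith [hτ.2]⟩
    have hp_nonneg : 0 ≤ ∫ τ in (0 : ℝ)..u, p τ := by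
      apply intervalIntegral.integral_nonneg hu0.le
      intro τ hτ
      apply mul_nonneg
      · linarith [hx_ge τ hτ]
      · exact mul_nonneg hα0.le (Real.rpow_nonneg (by linarith [hτ.2]) _)
    have h0_nonneg : 0 ≤ h 0 :=
      mul_nonneg (by linarith) (Real.rpow_nonneg (by linarith) _)
    have h1le : (∫ τ in (0 : ℝ)..u, f τ) ≤ h u := by linarith
    -- Part 2: h u ≤ ∫ u..t₁ g
    have hx'c : ContinuousOn x' (Icc u t₁) :=
      hderiv_cont.mono (fun s hs => ⟨lt_of_lt_of_le hu0 hs.1, le_trans hs.2 ht₁T⟩)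
    have hx'_int : IntervalIntegrable x' volume u t₁ := by
      apply ContinuousOn.intervalIntegrable
      rwa [uIcc_of_le hut.le]
    have hFTC2 : ∫ τ in u..t₁, x' τ = x t₁ - x u := by
      apply intervalIntegral.integral_eq_sub_of_hasDerivAt_of_le hut.le
        (hxc.mono (Icc_subset_Icc hu0.le le_rfl))
        (fun τ hτ => hderiv τ ⟨lt_trans hu0 hτ.1, by linarith [hτ.2]⟩) hx'_int
    have hcw : (0 : ℝ) ≤ (t₁ - u) ^ (-α) := Real.rpow_nonneg (by linarith) _
    have habs : -(∫ τ in u..t₁, x' τ) ≤ ∫ τ in u..t₁, |x' τ| := by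
      have h1 := intervalIntegral.abs_integral_le_integral_abs (f := x')
        (a := u) (b := t₁) (μ := volume) hut.le
      linarith [neg_abs_le (∫ τ in u..t₁, x' τ)]
    have h2le : h u ≤ ∫ τ in u..t₁, (t₁ - u) ^ (-α) * |x' τ| := by
      have hhu : h u = (t₁ - u) ^ (-α) * -(∫ τ in u..t₁, x' τ) := by
        rw [hFTC2]; simp only [hh_def]; ring
      rw [hhu]
      calc (t₁ - u) ^ (-α) * -(∫ τ in u..t₁, x' τ)
          ≤ (t₁ - u) ^ (-α) * ∫ τ in u..t₁, |x' τ| :=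
            mul_le_mul_of_nonneg_left habs hcw
        _ = ∫ τ in u..t₁, (t₁ - u) ^ (-α) * |x' τ| := by
            rw [← intervalIntegral.integral_const_mul]
    have hcw_int : IntervalIntegrable (fun τ => (t₁ - u) ^ (-α) * |x' τ|) volume u t₁ :=
      (hx'_int.abs).const_mul _
    have h3le : (∫ τ in u..t₁, (t₁ - u) ^ (-α) * |x' τ|) ≤ ∫ τ in u..t₁, g τ := by
      apply intervalIntegral.integral_mono_ae_restrict hut.le hcw_int hg_int_ut
      have hne : ∀ᵐ (τ : ℝ) ∂(volume.restrict (Icc u t₁)), τ ≠ t₁ := by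
        apply MeasureTheory.ae_restrict_of_ae
        rw [MeasureTheory.ae_iff]
        simpa using MeasureTheory.measure_singleton t₁
      have hmem : ∀ᵐ (τ : ℝ) ∂(volume.restrict (Icc u t₁)), τ ∈ Icc u t₁ :=
        MeasureTheory.ae_restrict_mem measurableSet_Icc
      filter_upwards [hne, hmem] with τ hτne hτmem
      have hpos : 0 < t₁ - τ := by
        rcases lt_or_eq_of_le hτmem.2 with h | h
        · linarith
        · exact absurd h hτne
      have : (t₁ - u) ^ (-α) ≤ (t₁ - τ) ^ (-α) :=
        Real.rpow_le_rpow_of_nonpos hpos (by linarith [hτmem.1]) (by linarith)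
      exact mul_le_mul_of_nonneg_right this (abs_nonneg _)
    -- Part 3: tail of f is at most tail of g
    have h4le : (∫ τ in u..t₁, f τ) ≤ ∫ τ in u..t₁, g τ := by
      apply intervalIntegral.integral_mono_on hut.le hf_int_ut hg_int_ut
      intro τ hτ
      calc f τ ≤ |f τ| := le_abs_self _
        _ = g τ := hfg τ hτ.2
    have hIsplit : (∫ τ in (0 : ℝ)..t₁, f τ)
        = (∫ τ in (0 : ℝ)..u, f τ) + ∫ τ in u..t₁, f τ :=
      (intervalIntegral.integral_add_adjacent_intervals hf_int_0u hf_int_ut).symm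
    linarith
  -- take the limit u → t₁⁻
  have hI : (∫ τ in (0 : ℝ)..t₁, f τ) ≤ 0 := by
    set F : ℝ → ℝ := fun u => ∫ τ in u..t₁, g τ with hF_def
    have hg_Icc : MeasureTheory.IntegrableOn g (uIcc 0 t₁) volume := by
      rw [uIcc_of_le ht₁0.le, integrableOn_Icc_iff_integrableOn_Ioc]
      rwa [intervalIntegrable_iff_integrableOn_Ioc_of_le ht₁0.le] at hg_int
    have hFcont : ContinuousOn F (uIcc 0 t₁) :=
      intervalIntegral.continuousOn_primitive_interval_left hg_Icc
    have hF0 : F t₁ = 0 := by simp [hF_def]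
    have hmemt : t₁ ∈ uIcc 0 t₁ := by
      rw [uIcc_of_le ht₁0.le]; exact ⟨ht₁0.le, le_rfl⟩
    have htends : Filter.Tendsto F (nhdsWithin t₁ (Ioo 0 t₁)) (nhds 0) := by
      have h1 : Filter.Tendsto F (nhdsWithin t₁ (uIcc 0 t₁)) (nhds (F t₁)) :=
        (hFcont t₁ hmemt).tendsto
      rw [hF0] at h1
      exact h1.mono_left (nhdsWithin_mono t₁ (by
        rw [uIcc_of_le ht₁0.le]; exact Ioo_subset_Icc_self.trans (Icc_subset_Icc le_rfl le_rfl)))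
    have htends2 : Filter.Tendsto (fun u => 2 * F u) (nhdsWithin t₁ (Ioo 0 t₁)) (nhds 0) := by
      have := htends.const_mul (2 : ℝ)
      simpa using this
    have hne : Filter.NeBot (nhdsWithin t₁ (Ioo 0 t₁)) :=
      right_nhdsWithin_Ioo_neBot ht₁0
    apply ge_of_tendsto htends2
    filter_upwards [self_mem_nhdsWithin] with u hu
    exact key u hu
  exact mul_nonpos_iff.mpr (Or.inl ⟨by positivity, hI⟩)
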